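/- arXiv:2507.15632 — 3 statements merged into one kernel-verified Lean document; each statement's English description precedes it below -/
import Mathlib

section
/- Let e, k ≥ 1, let Θ ⊆ ℝ^e be a nonempty compact set, and let q : (Fin k → ℝ^e) → ℝ be continuous. Then inf_{n ≥ 1} inf_{x : Fin n → Θ} n^(−k) · ∑_{f : Fin k → Fin n} q(x ∘ f) = inf_{μ} ∫ q d(μ^{⊗k}), where the right-hand infimum is over all Borel probability measures μ on ℝ^e with μ(Θ) = 1, and μ^{⊗k} denotes the k-fold product measure on (Fin k → ℝ^e). -/
open MeasureTheory
open scoped ENNReal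

lemma aux_map_comp {α : Type*} [MeasurableSpace α] (μ : Measure α) [IsProbabilityMeasure μ]
    {n k : ℕ} {f : Fin k → Fin n} (hf : Function.Injective f) :
    Measure.map (fun x : Fin n → α => x ∘ f) (Measure.pi fun _ : Fin n => μ)
      = Measure.pi fun _ : Fin k => μ := by
  classical
  refine (Measure.pi_eq fun s hs => ?_).symm
  have hmeas : Measurable (fun x : Fin n → α => x ∘ f) :=
    measurable_pi_lambda _ fun i => measurable_pi_apply (f i)
  rw [Measure.map_apply hmeas (MeasurableSet.univ_pi hs)]
  have hpre : (fun x : Fin n → α => x ∘ f) ⁻¹' (Set.pi Set.univ s)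
      = Set.pi Set.univ (fun j => ⋂ (i : Fin k) (_ : f i = j), s i) := by
    ext x
    simp only [Set.mem_preimage, Set.mem_pi, Set.mem_univ, forall_true_left, Set.mem_iInter,
      Function.comp_apply]
    constructor
    · rintro h j i rfl; exact h i
    · intro h i; exact h (f i) i rfl
  rw [hpre, Measure.pi_pi]
  have ht : ∀ i : Fin k, (⋂ (i' : Fin k) (_ : f i' = f i), s i') = s i := by
    intro i
    apply Set.eq_of_subset_of_subset
    · exact Set.iInter_subset_of_subset i (by simp)
    · intro x hx
      simp only [Set.mem_iInter]
      intro i' hi'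
      cases hf hi'
      exact hx
  calc ∏ j : Fin n, μ (⋂ (i : Fin k) (_ : f i = j), s i)
      = ∏ j ∈ Finset.univ.image f, μ (⋂ (i : Fin k) (_ : f i = j), s i) := by
        refine (Finset.prod_subset (Finset.subset_univ _) ?_).symm
        intro j _ hj
        have : ∀ i : Fin k, f i ≠ j := by
          intro i hij
          exact hj (Finset.mem_image.2 ⟨i, Finset.mem_univ _, hij⟩)
        have : (⋂ (i : Fin k) (_ : f i = j), s i) = Set.univ := by
          simp only [Set.iInter_eq_univ]
          intro i
          simp [this i]
        rw [this, measure_univ]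
    _ = ∏ i : Fin k, μ (⋂ (i' : Fin k) (_ : f i' = f i), s i') :=
        Finset.prod_image (fun i _ i' _ h => hf h)
    _ = ∏ i : Fin k, μ (s i) := by simp_rw [ht]

lemma aux_ae_mem {α : Type*} [MeasurableSpace α] (μ : Measure α) [IsProbabilityMeasure μ]
    {Θ : Set α} (hΘ : MeasurableSet Θ) (hμ : μ Θ = 1) (m : ℕ) :
    ∀ᵐ x ∂(Measure.pi fun _ : Fin m => μ), ∀ i, x i ∈ Θ := by
  have h : (Measure.pi fun _ : Fin m => μ) (Set.pi Set.univ fun _ => Θ) = 1 := by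
    rw [Measure.pi_pi]; simp [hμ]
  have h2 : (Measure.pi fun _ : Fin m => μ) (Set.pi Set.univ fun _ => Θ)ᶜ = 0 := by
    rw [measure_compl (MeasurableSet.univ_pi fun _ => hΘ) (measure_ne_top _ _), h]
    simp
  rw [ae_iff]
  refine measure_mono_null ?_ h2
  intro x hx
  simp only [Set.mem_compl_iff, Set.mem_pi, Set.mem_univ, forall_true_left]
  simpa using hx

lemma aux_desc (n : ℕ) (hn : 1 ≤ n) :
    ∀ k : ℕ, (n:ℝ) * ((n:ℝ)^k - (n.descFactorial k : ℝ)) ≤ (k:ℝ)^2 * (n:ℝ)^k := by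
  intro k
  induction k with
  | zero => simp
  | succ k ih =>
    have hn' : (1:ℝ) ≤ (n:ℝ) := by exact_mod_cast hn
    have ha : (0:ℝ) ≤ (n:ℝ)^k := by positivity
    have hd : ((n.descFactorial k : ℕ) : ℝ) ≤ (n:ℝ)^k := by
      exact_mod_cast Nat.descFactorial_le_pow n k
    have hd0 : (0:ℝ) ≤ ((n.descFactorial k : ℕ) : ℝ) := Nat.cast_nonneg _
    by_cases hkn : n ≤ k
    · have : n.descFactorial (k+1) = 0 := Nat.descFactorial_eq_zero_iff_lt.2 (by omega)
      rw [this]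
      have hnk : (n:ℝ) ≤ (k:ℝ) := by exact_mod_cast hkn
      push_cast
      nlinarith [pow_nonneg (le_trans zero_le_one hn') (k+1)]
    · have hsub : n.descFactorial (k+1) = (n - k) * n.descFactorial k := Nat.descFactorial_succ n k
      have hcast : ((n - k : ℕ) : ℝ) = (n:ℝ) - (k:ℝ) := by
        rw [Nat.cast_sub (by omega)]
      rw [hsub]
      push_cast [hcast]
      have hk0 : (0:ℝ) ≤ (k:ℝ) := Nat.cast_nonneg _
      have hn0 : (0:ℝ) ≤ (n:ℝ) := le_trans zero_le_one hn'
      rw [pow_succ]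
      nlinarith [mul_le_mul_of_nonneg_left ih hn0,
        mul_le_mul_of_nonneg_left hd (mul_nonneg hn0 hk0),
        mul_nonneg (mul_nonneg ha hn0) hk0, mul_nonneg ha hn0]

lemma aux_card_inj (n k : ℕ) [DecidablePred (Function.Injective : (Fin k → Fin n) → Prop)] :
    (Finset.univ.filter (fun f : Fin k → Fin n => Function.Injective f)).card
      = n.descFactorial k := by
  rw [← Fintype.card_subtype]
  rw [Fintype.card_congr (Equiv.subtypeInjectiveEquivEmbedding (Fin k) (Fin n))]
  simp [Fintype.card_embedding_eq]

theorem stmt15 (e k : ℕ) (he : 1 ≤ e) (hk : 1 ≤ k)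
    (Θ : Set (Fin e → ℝ)) (hne : Θ.Nonempty) (hcpt : IsCompact Θ)
    (q : (Fin k → Fin e → ℝ) → ℝ) (hq : Continuous q) :
    sInf {r : ℝ | ∃ n : ℕ, 1 ≤ n ∧ ∃ x : Fin n → Fin e → ℝ, (∀ i, x i ∈ Θ) ∧
        r = ((n : ℝ) ^ k)⁻¹ * ∑ f : Fin k → Fin n, q (x ∘ f)}
      = sInf {r : ℝ | ∃ μ : Measure (Fin e → ℝ),
          IsProbabilityMeasure μ ∧ μ Θ = 1 ∧
          r = ∫ z, q z ∂(Measure.pi fun _ : Fin k => μ)} := by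
  classical
  have hΘm : MeasurableSet Θ := hcpt.isClosed.measurableSet
  obtain ⟨θ, hθ⟩ := hne
  set A := {r : ℝ | ∃ n : ℕ, 1 ≤ n ∧ ∃ x : Fin n → Fin e → ℝ, (∀ i, x i ∈ Θ) ∧
      r = ((n : ℝ) ^ k)⁻¹ * ∑ f : Fin k → Fin n, q (x ∘ f)} with hA
  set B := {r : ℝ | ∃ μ : Measure (Fin e → ℝ), IsProbabilityMeasure μ ∧ μ Θ = 1 ∧
      r = ∫ z, q z ∂(Measure.pi fun _ : Fin k => μ)} with hB
  -- a uniform bound C for q on Θ^k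
  have hK : IsCompact (Set.pi Set.univ fun _ : Fin k => Θ) := isCompact_univ_pi fun _ => hcpt
  have hKne : (Set.pi Set.univ fun _ : Fin k => Θ).Nonempty := ⟨fun _ => θ, fun i _ => hθ⟩
  obtain ⟨z₀, hz₀, hzmax'⟩ := hK.exists_isMaxOn hKne (continuous_abs.comp hq).continuousOn
  have hzmax := isMaxOn_iff.1 hzmax'
  set C := |q z₀| with hC
  have hC0 : 0 ≤ C := abs_nonneg _
  have hCb : ∀ z, (∀ i, z i ∈ Θ) → |q z| ≤ C := fun z hz => hzmax z (fun i _ => hz i)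
  have hprecomp : ∀ (m : ℕ) (f : Fin k → Fin m),
      Continuous (fun x : Fin m → Fin e → ℝ => x ∘ f) :=
    fun m f => continuous_pi fun i => continuous_apply (f i)
  -- integrability and bound for precompositions
  have key : ∀ (μ : Measure (Fin e → ℝ)), IsProbabilityMeasure μ → μ Θ = 1 →
      ∀ (m : ℕ) (f : Fin k → Fin m),
      Integrable (fun x : Fin m → Fin e → ℝ => q (x ∘ f)) (Measure.pi fun _ : Fin m => μ) ∧
      |∫ x, q (x ∘ f) ∂(Measure.pi fun _ : Fin m => μ)| ≤ C := by
    intro μ hμp hμΘ m f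
    haveI := hμp
    have hae := aux_ae_mem μ hΘm hμΘ m
    have haeb : ∀ᵐ x ∂(Measure.pi fun _ : Fin m => μ), ‖q (x ∘ f)‖ ≤ C := by
      filter_upwards [hae] with x hx
      rw [Real.norm_eq_abs]
      exact hCb _ (fun i => hx (f i))
    have hsm : AEStronglyMeasurable (fun x : Fin m → Fin e → ℝ => q (x ∘ f))
        (Measure.pi fun _ : Fin m => μ) :=
      (hq.comp (hprecomp m f)).aestronglyMeasurable
    have hint : Integrable (fun x : Fin m → Fin e → ℝ => q (x ∘ f))
        (Measure.pi fun _ : Fin m => μ) :=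
      Integrable.mono' (integrable_const C) hsm haeb
    refine ⟨hint, ?_⟩
    have := norm_integral_le_of_norm_le_const haeb
    simpa [Real.norm_eq_abs] using this
  -- A ⊆ B via empirical measures
  have hAB : A ⊆ B := by
    rintro r ⟨n, hn, x, hx, rfl⟩
    have hn0 : (n : ℝ≥0∞) ≠ 0 := by exact_mod_cast (by omega : n ≠ 0)
    set ν : Measure (Fin n) := ((n : ℝ≥0∞))⁻¹ • Measure.count with hν
    haveI hνp : IsProbabilityMeasure ν := ⟨by
      simp only [hν, Measure.smul_apply, Measure.count_univ, ENat.card_eq_coe_fintype_card, Fintype.card_fin,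
        ENat.toENNReal_coe, smul_eq_mul]
      exact ENNReal.inv_mul_cancel hn0 (ENNReal.natCast_ne_top n)⟩
    have hxm : Measurable x := measurable_from_top
    set μ := Measure.map x ν with hμ
    haveI hμp : IsProbabilityMeasure μ := Measure.isProbabilityMeasure_map hxm.aemeasurable
    have hμΘ : μ Θ = 1 := by
      rw [hμ, Measure.map_apply hxm hΘm]
      have : x ⁻¹' Θ = Set.univ := Set.eq_univ_of_forall fun i => hx i
      rw [this, measure_univ]
    refine ⟨μ, hμp, hμΘ, ?_⟩
    have hmp : MeasurePreserving (fun g : Fin k → Fin n => fun i => x (g i))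
        (Measure.pi fun _ : Fin k => ν) (Measure.pi fun _ : Fin k => μ) :=
      measurePreserving_pi _ _ (fun _ => ⟨hxm, rfl⟩)
    rw [← hmp.map_eq, integral_map hmp.measurable.aemeasurable hq.aestronglyMeasurable]
    rw [integral_fintype (Integrable.of_finite)]
    have hsingle : ∀ g : Fin k → Fin n,
        ((Measure.pi fun _ : Fin k => ν) {g}).toReal = ((n : ℝ) ^ k)⁻¹ := by
      intro g
      rw [← Set.univ_pi_singleton, Measure.pi_pi]
      simp only [hν, Measure.smul_apply, Measure.count_singleton, smul_eq_mul, mul_one]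
      rw [Finset.prod_const, Finset.card_univ, Fintype.card_fin]
      rw [ENNReal.toReal_pow, ENNReal.toReal_inv]
      simp [inv_pow]
    simp only [measureReal_def, hsingle, smul_eq_mul, ← Finset.mul_sum]
    rfl
  have hAne : A.Nonempty :=
    ⟨_, ⟨1, le_refl 1, fun _ => θ, fun _ => hθ, rfl⟩⟩
  have hBbdd : BddBelow B := by
    refine ⟨-C, ?_⟩
    rintro r ⟨μ, hμp, hμΘ, rfl⟩
    have h := (key μ hμp hμΘ k id).2
    simp only [Function.comp_id] at h
    exact neg_le_of_abs_le h
  have hAbdd : BddBelow A := hBbdd.mono hAB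
  -- main direction : sInf A ≤ every element of B
  have hmain : ∀ r ∈ B, sInf A ≤ r := by
    rintro r ⟨μ, hμp, hμΘ, rfl⟩
    haveI := hμp
    set I := ∫ z, q z ∂(Measure.pi fun _ : Fin k => μ) with hIdef
    have hIC : |I| ≤ C := by
      have h := (key μ hμp hμΘ k id).2
      simpa only [Function.comp_id] using h
    refine le_of_forall_pos_le_add ?_
    intro ε hε
    set n : ℕ := max 1 (Nat.ceil ((2 * C * (k : ℝ) ^ 2) / ε)) with hndef
    have hn1 : 1 ≤ n := le_max_left _ _
    have hn0 : (0 : ℝ) < n := by exact_mod_cast (by omega : 0 < n)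
    have hNeps : 2 * C * (k : ℝ) ^ 2 ≤ n * ε := by
      have h1 : (2 * C * (k : ℝ) ^ 2) / ε ≤ (Nat.ceil ((2 * C * (k : ℝ) ^ 2) / ε) : ℝ) :=
        Nat.le_ceil _
      have h2n : Nat.ceil ((2 * C * (k : ℝ) ^ 2) / ε) ≤ n := le_max_right _ _
      have h2 : ((Nat.ceil ((2 * C * (k : ℝ) ^ 2) / ε) : ℕ) : ℝ) ≤ (n : ℝ) :=
        Nat.cast_le.2 h2n
      rw [div_le_iff₀ hε] at h1
      calc 2 * C * (k : ℝ) ^ 2 ≤ (Nat.ceil ((2 * C * (k : ℝ) ^ 2) / ε) : ℝ) * ε := h1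
        _ ≤ n * ε := by exact mul_le_mul_of_nonneg_right (le_trans h2 (le_refl _)) hε.le
    have hPk : (0 : ℝ) < (n : ℝ) ^ k := by positivity
    -- minimizer over Θ^n
    set G := fun x : Fin n → Fin e → ℝ =>
      ((n : ℝ) ^ k)⁻¹ * ∑ f : Fin k → Fin n, q (x ∘ f) with hG
    have hGcont : Continuous G :=
      continuous_const.mul (continuous_finset_sum _ fun f _ => hq.comp (hprecomp n f))
    obtain ⟨x₀, hx₀K, hmin'⟩ := (isCompact_univ_pi fun _ : Fin n => hcpt).exists_isMinOn
      ⟨fun _ => θ, fun i _ => hθ⟩ hGcont.continuousOn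
    have hmin := isMinOn_iff.1 hmin'
    have hx₀Θ : ∀ i, x₀ i ∈ Θ := fun i => hx₀K i (Set.mem_univ i)
    have hstep1 : sInf A ≤ G x₀ := csInf_le hAbdd ⟨n, hn1, x₀, hx₀Θ, rfl⟩
    -- G x₀ ≤ ∫ G dμ^n
    set μn := (Measure.pi fun _ : Fin n => μ) with hμn
    have hGint : Integrable G μn :=
      ((integrable_finset_sum Finset.univ fun f _ => (key μ hμp hμΘ n f).1).const_mul _)
    have hGmono : ∀ᵐ x ∂μn, G x₀ ≤ G x := by
      filter_upwards [aux_ae_mem μ hΘm hμΘ n] with x hx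
      exact hmin x (fun i _ => hx i)
    have hstep2 : G x₀ ≤ ∫ x, G x ∂μn := by
      have h1 : G x₀ = ∫ _x, G x₀ ∂μn := by
        rw [integral_const]; simp
      rw [h1]
      exact integral_mono_ae (integrable_const _) hGint hGmono
    -- compute / bound ∫ G dμ^n
    have hGeq : ∫ x, G x ∂μn
        = ((n : ℝ) ^ k)⁻¹ * ∑ f : Fin k → Fin n, ∫ x, q (x ∘ f) ∂μn := by
      rw [hG]
      simp only []
      rw [integral_const_mul]
      rw [integral_finset_sum _ fun f _ => (key μ hμp hμΘ n f).1]
    have hinj : ∀ f : Fin k → Fin n, Function.Injective f →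
        (∫ x, q (x ∘ f) ∂μn) = I := by
      intro f hf
      rw [hIdef, hμn, ← aux_map_comp μ hf,
        integral_map (hprecomp n f).measurable.aemeasurable hq.aestronglyMeasurable]
    have hbound : ∀ f : Fin k → Fin n, (∫ x, q (x ∘ f) ∂μn) ≤ C :=
      fun f => le_of_abs_le (key μ hμp hμΘ n f).2
    set Dn := n.descFactorial k with hDn
    have hcardinj : (Finset.univ.filter (fun f : Fin k → Fin n => Function.Injective f)).card
        = Dn := aux_card_inj n k
    have hcardall : (Finset.univ : Finset (Fin k → Fin n)).card = n ^ k := by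
      simp [Finset.card_univ]
    have hsum : ∑ f : Fin k → Fin n, ∫ x, q (x ∘ f) ∂μn
        ≤ (Dn : ℝ) * I + ((n : ℝ) ^ k - (Dn : ℝ)) * C := by
      rw [← Finset.sum_filter_add_sum_filter_not Finset.univ
        (fun f : Fin k → Fin n => Function.Injective f)]
      have h1 : ∑ f ∈ Finset.univ.filter (fun f : Fin k → Fin n => Function.Injective f),
          ∫ x, q (x ∘ f) ∂μn = (Dn : ℝ) * I := by
        rw [Finset.sum_congr rfl (fun f hf => hinj f (Finset.mem_filter.1 hf).2),
          Finset.sum_const, hcardinj, nsmul_eq_mul]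
      have h2 : ∑ f ∈ Finset.univ.filter (fun f : Fin k → Fin n => ¬ Function.Injective f),
          ∫ x, q (x ∘ f) ∂μn ≤ ((n : ℝ) ^ k - (Dn : ℝ)) * C := by
        have hcard : (Finset.univ.filter
            (fun f : Fin k → Fin n => ¬ Function.Injective f)).card = n ^ k - Dn := by
          have := Finset.card_filter_add_card_filter_not
            (s := (Finset.univ : Finset (Fin k → Fin n)))
            (p := fun f => Function.Injective f)
          omega
        calc ∑ f ∈ Finset.univ.filter (fun f : Fin k → Fin n => ¬ Function.Injective f),
            ∫ x, q (x ∘ f) ∂μn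
            ≤ (Finset.univ.filter (fun f : Fin k → Fin n => ¬ Function.Injective f)).card • C :=
              Finset.sum_le_card_nsmul _ _ _ (fun f _ => hbound f)
          _ = ((n ^ k - Dn : ℕ) : ℝ) * C := by rw [hcard, nsmul_eq_mul]
          _ = ((n : ℝ) ^ k - (Dn : ℝ)) * C := by
              rw [Nat.cast_sub (Nat.descFactorial_le_pow n k)]
              push_cast
              ring_nf
              rw [hDn, mul_comm C]
        
      linarith [h1, h2]
    have hDle : (Dn : ℝ) ≤ (n : ℝ) ^ k := by
      exact_mod_cast Nat.descFactorial_le_pow n k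
    have hdesc := aux_desc n hn1 k
    have h2CΔ : 2 * C * ((n : ℝ) ^ k - (Dn : ℝ)) ≤ ε * (n : ℝ) ^ k := by
      have h1 : (n : ℝ) * (2 * C * ((n : ℝ) ^ k - (Dn : ℝ)))
          ≤ (n : ℝ) * (ε * (n : ℝ) ^ k) := by
        nlinarith [mul_le_mul_of_nonneg_left hdesc (by linarith : (0:ℝ) ≤ 2 * C),
          mul_le_mul_of_nonneg_right hNeps hPk.le]
      exact le_of_mul_le_mul_left h1 hn0
    have hfinal : ((n : ℝ) ^ k)⁻¹ * ((Dn : ℝ) * I + ((n : ℝ) ^ k - (Dn : ℝ)) * C) ≤ I + ε := by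
      rw [inv_mul_le_iff₀ hPk]
      have hImC : -C ≤ I := neg_le_of_abs_le hIC
      nlinarith [mul_le_mul_of_nonneg_left hImC (by linarith : (0:ℝ) ≤ (n : ℝ) ^ k - (Dn : ℝ))]
    calc sInf A ≤ G x₀ := hstep1
      _ ≤ ∫ x, G x ∂μn := hstep2
      _ = ((n : ℝ) ^ k)⁻¹ * ∑ f : Fin k → Fin n, ∫ x, q (x ∘ f) ∂μn := hGeq
      _ ≤ ((n : ℝ) ^ k)⁻¹ * ((Dn : ℝ) * I + ((n : ℝ) ^ k - (Dn : ℝ)) * C) := by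
          exact mul_le_mul_of_nonneg_left hsum (inv_nonneg.2 hPk.le)
      _ ≤ I + ε := hfinal
  exact le_antisymm (le_csInf (hAne.mono hAB) hmain) (csInf_le_csInf hBbdd hAne hAB)
end

section
/- Let v, n ≥ 1 be integers, let H : Fin v → Fin v → ℕ, and let X : Fin n → Fin n → ℝ. Define hom(H; X) = ∑_{f : Fin v → Fin n} ∏_{i, j ∈ Fin v} (X (f i) (f j))^{H i j}, and for w ≥ 1 and B : Fin w → Fin w → ℕ define inj(B; X) = ∑_{g : Fin w → Fin n injective} ∏_{a, b ∈ Fin w} (X (g a) (g b))^{B a b}. For a surjection s : Fin v → Fin w, define the quotient H/s : Fin w → Fin w → ℕ by (H/s)(a, b) = ∑_{i ∈ s⁻¹(a)} ∑_{j ∈ s⁻¹(b)} H i j. Then hom(H; X) = ∑_{w = 1}^{v} (1/w!) · ∑_{s : Fin v → Fin w surjective} inj(H/s; X). -/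
/-- Weighted graph homomorphism number `hom(H; X)`. -/
noncomputable def homNum {v n : ℕ} (H : Fin v → Fin v → ℕ) (X : Fin n → Fin n → ℝ) : ℝ :=
  ∑ f : Fin v → Fin n, ∏ i : Fin v, ∏ j : Fin v, (X (f i) (f j)) ^ (H i j)

/-- Injective weighted graph homomorphism number `inj(B; X)`. -/
noncomputable def injNum {w n : ℕ} (B : Fin w → Fin w → ℕ) (X : Fin n → Fin n → ℝ) : ℝ :=
  ∑ g ∈ Finset.univ.filter (fun g : Fin w → Fin n => Function.Injective g),
    ∏ a : Fin w, ∏ b : Fin w, (X (g a) (g b)) ^ (B a b)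

/-- The quotient multigraph `H/s` along a map `s`: `(H/s)(a,b) = ∑_{i ∈ s⁻¹ a, j ∈ s⁻¹ b} H i j`. -/
def quotH {v w : ℕ} (H : Fin v → Fin v → ℕ) (s : Fin v → Fin w) : Fin w → Fin w → ℕ :=
  fun a b => ∑ i ∈ Finset.univ.filter (fun i => s i = a),
    ∑ j ∈ Finset.univ.filter (fun j => s j = b), H i j

section Aux
open Finset Function

lemma weight_comp {v w n : ℕ} (H : Fin v → Fin v → ℕ) (X : Fin n → Fin n → ℝ)
    (s : Fin v → Fin w) (g : Fin w → Fin n) :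
    (∏ a : Fin w, ∏ b : Fin w, (X (g a) (g b)) ^ (quotH H s a b)) =
    ∏ i : Fin v, ∏ j : Fin v, (X ((g ∘ s) i) ((g ∘ s) j)) ^ (H i j) := by
  calc ∏ a : Fin w, ∏ b : Fin w, (X (g a) (g b)) ^ (quotH H s a b)
      = ∏ a : Fin w, ∏ b : Fin w, ∏ i ∈ univ.filter (fun i => s i = a),
          ∏ j ∈ univ.filter (fun j => s j = b), (X (g (s i)) (g (s j))) ^ (H i j) := by
        refine prod_congr rfl fun a _ => prod_congr rfl fun b _ => ?_
        unfold quotH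
        rw [← Finset.prod_pow_eq_pow_sum]
        refine prod_congr rfl fun i hi => ?_
        rw [← Finset.prod_pow_eq_pow_sum]
        refine prod_congr rfl fun j hj => ?_
        simp only [mem_filter, mem_univ, true_and] at hi hj
        rw [hi, hj]
    _ = ∏ a : Fin w, ∏ i ∈ univ.filter (fun i => s i = a), ∏ b : Fin w,
          ∏ j ∈ univ.filter (fun j => s j = b), (X (g (s i)) (g (s j))) ^ (H i j) := by
        exact prod_congr rfl fun a _ => Finset.prod_comm
    _ = ∏ i : Fin v, ∏ j : Fin v, (X ((g ∘ s) i) ((g ∘ s) j)) ^ (H i j) := by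
        rw [← Finset.prod_fiberwise univ s
          (fun i => ∏ j : Fin v, (X ((g ∘ s) i) ((g ∘ s) j)) ^ (H i j))]
        exact prod_congr rfl fun a _ => prod_congr rfl fun i _ =>
          Finset.prod_fiberwise univ s _

lemma fiber_forces {v n w : ℕ} (f : Fin v → Fin n)
    (p : (Fin v → Fin w) × (Fin w → Fin n))
    (hp : Surjective p.1 ∧ Injective p.2 ∧ p.2 ∘ p.1 = f) :
    (Finset.univ.image f).card = w := by
  obtain ⟨hs, hg, hc⟩ := hp
  have : Finset.univ.image f = Finset.univ.image p.2 := by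
    rw [← hc, ← Finset.image_image, Finset.image_univ_of_surjective hs]
  rw [this, Finset.card_image_of_injective _ hg]
  simp

lemma fiber_count {v n w : ℕ} (f : Fin v → Fin n)
    (hw : (Finset.univ.image f).card = w) :
    ((Finset.univ : Finset ((Fin v → Fin w) × (Fin w → Fin n))).filter
      (fun p => Surjective p.1 ∧ Injective p.2 ∧ p.2 ∘ p.1 = f)).card = w.factorial := by
  classical
  set T := Finset.univ.image f with hT
  have hmemf : ∀ i : Fin v, f i ∈ T := fun i => Finset.mem_image_of_mem f (Finset.mem_univ i)
  have hcard : Fintype.card {x // x ∈ T} = w := by rw [Fintype.card_coe, hw]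
  have key : ((Finset.univ : Finset ((Fin v → Fin w) × (Fin w → Fin n))).filter
      (fun p => Surjective p.1 ∧ Injective p.2 ∧ p.2 ∘ p.1 = f)).card
      = (Finset.univ : Finset (Fin w ↪ {x // x ∈ T})).card := by
    refine Finset.card_bij'
      (i := fun p hp => ⟨fun a => ⟨p.2 a, ?_⟩, ?_⟩)
      (j := fun e he =>
        ((fun i => (Equiv.ofBijective e ((Fintype.bijective_iff_injective_and_card e).2
            ⟨e.injective, by simp [hcard]⟩)).symm ⟨f i, hmemf i⟩),
         (fun a => (e a : Fin n))))
      ?_ ?_ ?_ ?_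
    · simp only [Finset.mem_filter, Finset.mem_univ, true_and] at hp
      obtain ⟨i, rfl⟩ := hp.1 a
      have := congrFun hp.2.2 i
      simp only [comp_apply] at this
      rw [this]; exact hmemf i
    · intro a b h
      simp only [Finset.mem_filter, Finset.mem_univ, true_and] at hp
      exact hp.2.1 (congrArg Subtype.val h)
    · intro p hp; exact Finset.mem_univ _
    · intro e he
      simp only [Finset.mem_filter, Finset.mem_univ, true_and]
      set E := Equiv.ofBijective e ((Fintype.bijective_iff_injective_and_card e).2
            ⟨e.injective, by simp [hcard]⟩) with hE
      refine ⟨?_, ?_, ?_⟩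
      · intro a
        obtain ⟨i, _, hi⟩ := Finset.mem_image.1 (e a).2
        refine ⟨i, ?_⟩
        have h3 : (⟨f i, hmemf i⟩ : {x // x ∈ T}) = e a := Subtype.ext hi
        show E.symm ⟨f i, hmemf i⟩ = a
        exact (congrArg E.symm h3).trans (E.symm_apply_apply a)
      · intro a b h
        exact e.injective (Subtype.ext h)
      · funext i
        show (e (E.symm ⟨f i, hmemf i⟩) : Fin n) = f i
        have : e (E.symm ⟨f i, hmemf i⟩) = E (E.symm ⟨f i, hmemf i⟩) := rfl
        rw [this, E.apply_symm_apply]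
    · intro p hp
      simp only [Finset.mem_filter, Finset.mem_univ, true_and] at hp
      refine Prod.ext ?_ rfl
      funext i
      rw [Equiv.symm_apply_eq]
      exact Subtype.ext (congrFun hp.2.2 i).symm
    · intro e he
      ext a
      rfl
  rw [key, Finset.card_univ, Fintype.card_embedding_eq, hcard, Fintype.card_fin,
    Nat.descFactorial_self]

end Aux

open Finset Function in
set_option maxHeartbeats 1600000 in
theorem stmt18 (v n : ℕ) (hv : 1 ≤ v) (hn : 1 ≤ n)
    (H : Fin v → Fin v → ℕ) (X : Fin n → Fin n → ℝ) :
    homNum H X = ∑ w ∈ Finset.Icc 1 v, (Nat.factorial w : ℝ)⁻¹ *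
      ∑ s ∈ Finset.univ.filter (fun s : Fin v → Fin w => Function.Surjective s),
        injNum (quotH H s) X := by
  classical
  set W : (Fin v → Fin n) → ℝ :=
    fun f => ∏ i : Fin v, ∏ j : Fin v, (X (f i) (f j)) ^ (H i j) with hW
  have step : ∀ w : ℕ,
      (∑ s ∈ Finset.univ.filter (fun s : Fin v → Fin w => Function.Surjective s),
        injNum (quotH H s) X)
      = ∑ f : Fin v → Fin n,
          ((((Finset.univ : Finset ((Fin v → Fin w) × (Fin w → Fin n))).filter
            (fun p => Surjective p.1 ∧ Injective p.2 ∧ p.2 ∘ p.1 = f)).card : ℝ) * W f) := by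
    intro w
    calc (∑ s ∈ Finset.univ.filter (fun s : Fin v → Fin w => Function.Surjective s),
          injNum (quotH H s) X)
        = ∑ s ∈ Finset.univ.filter (fun s : Fin v → Fin w => Function.Surjective s),
            ∑ g ∈ Finset.univ.filter (fun g : Fin w → Fin n => Injective g), W (g ∘ s) := by
          refine sum_congr rfl fun s _ => sum_congr rfl fun g _ => ?_
          exact weight_comp H X s g
      _ = ∑ p ∈ (Finset.univ.filter (fun s : Fin v → Fin w => Surjective s)) ×ˢ
              (Finset.univ.filter (fun g : Fin w → Fin n => Injective g)), W (p.2 ∘ p.1) := by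
          rw [Finset.sum_product]
      _ = ∑ f : Fin v → Fin n,
            ∑ p ∈ ((Finset.univ.filter (fun s : Fin v → Fin w => Surjective s)) ×ˢ
              (Finset.univ.filter (fun g : Fin w → Fin n => Injective g))).filter
                (fun p => p.2 ∘ p.1 = f), W (p.2 ∘ p.1) :=
          (Finset.sum_fiberwise
            ((Finset.univ.filter (fun s : Fin v → Fin w => Surjective s)) ×ˢ
             (Finset.univ.filter (fun g : Fin w → Fin n => Injective g)))
            (fun p => p.2 ∘ p.1) (fun p => W (p.2 ∘ p.1))).symm
      _ = ∑ f : Fin v → Fin n,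
          ((((Finset.univ : Finset ((Fin v → Fin w) × (Fin w → Fin n))).filter
            (fun p => Surjective p.1 ∧ Injective p.2 ∧ p.2 ∘ p.1 = f)).card : ℝ) * W f) := by
          refine sum_congr rfl fun f _ => ?_
          have hset : ((Finset.univ.filter (fun s : Fin v → Fin w => Surjective s)) ×ˢ
              (Finset.univ.filter (fun g : Fin w → Fin n => Injective g))).filter
                (fun p => p.2 ∘ p.1 = f)
              = (Finset.univ : Finset ((Fin v → Fin w) × (Fin w → Fin n))).filter
                (fun p => Surjective p.1 ∧ Injective p.2 ∧ p.2 ∘ p.1 = f) := by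
            ext p
            simp [Finset.mem_product, and_assoc]
          rw [hset]
          rw [Finset.sum_congr rfl (fun p hp => by
            have := (Finset.mem_filter.1 hp).2.2.2
            rw [this])]
          rw [Finset.sum_const, nsmul_eq_mul]
  have indic : ∀ (w : ℕ) (f : Fin v → Fin n),
      ((Nat.factorial w : ℝ)⁻¹ *
        (((Finset.univ : Finset ((Fin v → Fin w) × (Fin w → Fin n))).filter
          (fun p => Surjective p.1 ∧ Injective p.2 ∧ p.2 ∘ p.1 = f)).card : ℝ))
      = if (Finset.univ.image f).card = w then 1 else 0 := by
    intro w f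
    by_cases h : (Finset.univ.image f).card = w
    · rw [if_pos h, fiber_count f h]
      field_simp
    · rw [if_neg h]
      have : ((Finset.univ : Finset ((Fin v → Fin w) × (Fin w → Fin n))).filter
          (fun p => Surjective p.1 ∧ Injective p.2 ∧ p.2 ∘ p.1 = f)) = ∅ := by
        refine Finset.filter_eq_empty_iff.2 fun p _ hp => h (fiber_forces f p hp)
      rw [this]
      simp
  calc homNum H X = ∑ f : Fin v → Fin n, W f := rfl
    _ = ∑ f : Fin v → Fin n,
          (∑ w ∈ Finset.Icc 1 v, if (Finset.univ.image f).card = w then (1:ℝ) else 0) * W f := by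
        refine sum_congr rfl fun f _ => ?_
        rw [Finset.sum_ite_eq, if_pos, one_mul]
        refine Finset.mem_Icc.2 ⟨?_, ?_⟩
        · refine Finset.card_pos.2 (Finset.Nonempty.image ⟨⟨0, hv⟩, Finset.mem_univ _⟩ f)
        · exact le_trans (Finset.card_image_le) (by simp)
    _ = ∑ w ∈ Finset.Icc 1 v, (Nat.factorial w : ℝ)⁻¹ *
          ∑ s ∈ Finset.univ.filter (fun s : Fin v → Fin w => Function.Surjective s),
            injNum (quotH H s) X := by
        simp only [Finset.sum_mul]
        rw [Finset.sum_comm]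
        refine sum_congr rfl fun w _ => ?_
        rw [step w, Finset.mul_sum]
        refine sum_congr rfl fun f _ => ?_
        rw [← mul_assoc, indic w f]
end

section
/- Let m, M ≥ 1 be integers with m dividing M. Then the pushforward of the product measure ⨂_{i ∈ Fin M} 𝒩(0, 1/M) on (Fin M → ℝ) under the block-sum map T_{d_{m,M}} (which sends x : Fin M → ℝ to the vector in Fin m → ℝ whose i-th entry is the sum of the entries of x over the i-th consecutive block of size M/m) equals the product measure ⨂_{i ∈ Fin m} 𝒩(0, 1/m) on (Fin m → ℝ). -/
open MeasureTheory ProbabilityTheory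
open scoped NNReal

open Real
open scoped ENNReal

/-- The binning operator: `(T_f x)(i) = ∑_{j : f j = i} x j`. -/
noncomputable def binOp {n m : ℕ} (f : Fin n → Fin m) (x : Fin n → ℝ) : Fin m → ℝ :=
  fun i => ∑ j ∈ Finset.univ.filter (fun j => f j = i), x j

/-- For `m ∣ n`, the standard equipartition `d_{m,n} : Fin n → Fin m`, sending the `i`-th
consecutive block of `n / m` indices to `i` (0-based: `x ↦ ⌊x / (n/m)⌋`). -/
def dmap (m n : ℕ) (hn : 0 < n) (hdvd : m ∣ n) : Fin n → Fin m :=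
  fun x => ⟨(x : ℕ) / (n / m), by
    have hm : 0 < m := Nat.pos_of_dvd_of_pos hdvd hn
    have hb : 0 < n / m := Nat.div_pos (Nat.le_of_dvd hn hdvd) hm
    refine (Nat.div_lt_iff_lt_mul hb).mpr ?_
    have hnm : m * (n / m) = n := Nat.mul_div_cancel' hdvd
    have := x.isLt
    omega⟩

lemma pdf_mul_pdf (a b : ℝ≥0) (ha : a ≠ 0) (hb : b ≠ 0) (z x : ℝ) :
    gaussianPDFReal 0 a x * gaussianPDFReal 0 b (z - x)
    = gaussianPDFReal 0 (a+b) z * gaussianPDFReal ((a:ℝ)*z/(a+b)) (a*b/(a+b)) x := by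
  have ha' : (0:ℝ) < a := lt_of_le_of_ne a.coe_nonneg (by exact_mod_cast ha.symm)
  have hb' : (0:ℝ) < b := lt_of_le_of_ne b.coe_nonneg (by exact_mod_cast hb.symm)
  have hab : (0:ℝ) < (a:ℝ) + b := by linarith
  simp only [gaussianPDFReal, NNReal.coe_add, NNReal.coe_div, NNReal.coe_mul]
  have hnorm : (Real.sqrt (2*π*a))⁻¹ * (Real.sqrt (2*π*b))⁻¹
      = (Real.sqrt (2*π*((a:ℝ)+b)))⁻¹ * (Real.sqrt (2*π*((a:ℝ)*b/((a:ℝ)+b))))⁻¹ := by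
    rw [← mul_inv, ← mul_inv, ← Real.sqrt_mul (by positivity), ← Real.sqrt_mul (by positivity)]
    congr 1
    field_simp
  have hexp : rexp (-(x-0)^2/(2*(a:ℝ))) * rexp (-((z-x)-0)^2/(2*b))
      = rexp (-(z-0)^2/(2*((a:ℝ)+b))) * rexp (-((x - (a:ℝ)*z/((a:ℝ)+b)))^2/(2*((a:ℝ)*b/((a:ℝ)+b)))) := by
    rw [← Real.exp_add, ← Real.exp_add]
    congr 1
    field_simp
    ring
  calc _ = ((Real.sqrt (2*π*a))⁻¹ * (Real.sqrt (2*π*b))⁻¹) *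
      (rexp (-(x-0)^2/(2*(a:ℝ))) * rexp (-((z-x)-0)^2/(2*b))) := by ring
    _ = _ := by rw [hnorm, hexp]; ring

lemma lintegral_pdf_conv (a b : ℝ≥0) (ha : a ≠ 0) (hb : b ≠ 0) (z : ℝ) :
    ∫⁻ x, gaussianPDF 0 a x * gaussianPDF 0 b (z - x) = gaussianPDF 0 (a+b) z := by
  have hv : a*b/(a+b) ≠ 0 := by
    have : a + b ≠ 0 := by simp [ha]
    simp [div_eq_zero_iff, ha, hb, this]
  have h1 : ∀ x, gaussianPDF 0 a x * gaussianPDF 0 b (z - x)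
      = ENNReal.ofReal (gaussianPDFReal 0 a x * gaussianPDFReal 0 b (z - x)) := by
    intro x
    rw [gaussianPDF, gaussianPDF, ← ENNReal.ofReal_mul (gaussianPDFReal_nonneg _ _ _)]
  simp_rw [h1, pdf_mul_pdf a b ha hb z]
  have hInt : Integrable (fun x => gaussianPDFReal 0 (a+b) z *
      gaussianPDFReal ((a:ℝ)*z/(a+b)) (a*b/(a+b)) x) :=
    (integrable_gaussianPDFReal _ _).const_mul _
  rw [← ofReal_integral_eq_lintegral_ofReal hInt
    (ae_of_all _ fun x => mul_nonneg (gaussianPDFReal_nonneg _ _ _) (gaussianPDFReal_nonneg _ _ _))]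
  rw [integral_const_mul, integral_gaussianPDFReal_eq_one _ hv, mul_one]
  rfl

lemma gaussianReal_conv (a b : ℝ≥0) :
    Measure.conv (gaussianReal 0 a) (gaussianReal 0 b) = gaussianReal 0 (a+b) := by
  classical
  by_cases ha : a = 0
  · subst ha; rw [gaussianReal_zero_var, Measure.dirac_zero_conv, zero_add]
  by_cases hb : b = 0
  · subst hb; rw [gaussianReal_zero_var, Measure.conv_dirac_zero, add_zero]
  show ((gaussianReal 0 a).prod (gaussianReal 0 b)).map (fun p : ℝ × ℝ => p.1 + p.2)
      = gaussianReal 0 (a+b)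
  ext s hs
  have hadd : Measurable (fun p : ℝ × ℝ => p.1 + p.2) := measurable_fst.add measurable_snd
  have hT : MeasurableSet ((fun p : ℝ × ℝ => p.1 + p.2) ⁻¹' s) := hadd hs
  rw [Measure.map_apply hadd hs]
  rw [gaussianReal_of_var_ne_zero _ ha, gaussianReal_of_var_ne_zero _ hb]
  set T := (fun p : ℝ × ℝ => p.1 + p.2) ⁻¹' s with hTdef
  have hindT : Measurable (T.indicator (1 : ℝ × ℝ → ℝ≥0∞)) := measurable_one.indicator hT
  have hmb : Measurable (gaussianPDF 0 b) := measurable_gaussianPDF 0 b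
  have hma : Measurable (gaussianPDF 0 a) := measurable_gaussianPDF 0 a
  have hinds : Measurable (s.indicator (1 : ℝ → ℝ≥0∞)) := measurable_one.indicator hs
  rw [← lintegral_indicator_one hT, lintegral_prod _ hindT.aemeasurable]
  have hinner : ∀ x : ℝ, (∫⁻ y, T.indicator 1 (x, y) ∂(volume.withDensity (gaussianPDF 0 b)))
      = ∫⁻ z, s.indicator 1 z * gaussianPDF 0 b (z - x) := by
    intro x
    rw [lintegral_withDensity_eq_lintegral_mul _ hmb
      (g := fun y => T.indicator 1 (x, y)) (hindT.comp (measurable_prodMk_left))]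
    simp only [Pi.mul_apply]
    have key : ∀ y : ℝ, gaussianPDF 0 b y * T.indicator 1 (x, y)
        = (fun z => s.indicator 1 z * gaussianPDF 0 b (z - x)) (x + y) := by
      intro y
      simp only [Set.indicator_apply, hTdef, Set.mem_preimage, add_sub_cancel_left]
      by_cases h : x + y ∈ s <;> simp [h, mul_comm]
    simp_rw [key]
    exact lintegral_add_left_eq_self (fun z => s.indicator 1 z * gaussianPDF 0 b (z - x)) x
  simp_rw [hinner]
  rw [lintegral_withDensity_eq_lintegral_mul _ hma]
  swap
  · exact Measurable.lintegral_prod_right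
      (f := fun x z => s.indicator 1 z * gaussianPDF 0 b (z - x))
      ((hinds.comp measurable_snd).mul (hmb.comp (measurable_snd.sub measurable_fst)))
  simp only [Pi.mul_apply]
  have hmeas2 : Measurable (Function.uncurry fun x z =>
      gaussianPDF 0 a x * (s.indicator 1 z * gaussianPDF 0 b (z - x))) :=
    (hma.comp measurable_fst).mul ((hinds.comp measurable_snd).mul
      (hmb.comp (measurable_snd.sub measurable_fst)))
  have hmz : ∀ x : ℝ, Measurable (fun z => s.indicator (1 : ℝ → ℝ≥0∞) z * gaussianPDF 0 b (z - x)) :=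
    fun x => hinds.mul (hmb.comp (measurable_id.sub_const x))
  have hmx : ∀ z : ℝ, Measurable (fun x => gaussianPDF 0 a x * gaussianPDF 0 b (z - x)) :=
    fun z => hma.mul (hmb.comp (measurable_const.sub measurable_id))
  have hswap : (∫⁻ x, gaussianPDF 0 a x * ∫⁻ z, s.indicator 1 z * gaussianPDF 0 b (z - x))
      = ∫⁻ z, s.indicator 1 z * ∫⁻ x, gaussianPDF 0 a x * gaussianPDF 0 b (z - x) := by
    calc (∫⁻ x, gaussianPDF 0 a x * ∫⁻ z, s.indicator 1 z * gaussianPDF 0 b (z - x))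
        = ∫⁻ x, ∫⁻ z, gaussianPDF 0 a x * (s.indicator 1 z * gaussianPDF 0 b (z - x)) := by
          congr with x
          rw [lintegral_const_mul _ (hmz x)]
      _ = ∫⁻ z, ∫⁻ x, gaussianPDF 0 a x * (s.indicator 1 z * gaussianPDF 0 b (z - x)) :=
          lintegral_lintegral_swap hmeas2.aemeasurable
      _ = ∫⁻ z, s.indicator 1 z * ∫⁻ x, gaussianPDF 0 a x * gaussianPDF 0 b (z - x) := by
          congr with z
          rw [← lintegral_const_mul _ (hmx z)]
          congr with x; ring
  rw [hswap]
  simp_rw [lintegral_pdf_conv a b ha hb]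
  rw [gaussianReal_of_var_ne_zero _ (by simp [ha]), withDensity_apply _ hs,
    ← lintegral_indicator hs]
  congr with z
  rw [Set.indicator_apply, Set.indicator_apply]
  by_cases h : z ∈ s <;> simp [h]

lemma pi_dirac_zero (m : ℕ) :
    Measure.pi (fun _ : Fin m => Measure.dirac (0:ℝ)) = Measure.dirac (fun _ : Fin m => (0:ℝ)) := by
  classical
  refine Measure.pi_eq fun s hs => ?_
  rw [Measure.dirac_apply' _ (MeasurableSet.univ_pi hs)]
  by_cases h : ∀ i, (0:ℝ) ∈ s i
  · rw [Set.indicator_of_mem (by simpa using h)]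
    rw [Finset.prod_congr rfl (fun i _ => Measure.dirac_apply' _ (hs i))]
    simp [Set.indicator_of_mem, h]
  · push_neg at h
    obtain ⟨i0, hi0⟩ := h
    rw [Set.indicator_of_notMem (by simp; exact ⟨i0, hi0⟩)]
    refine (Finset.prod_eq_zero (Finset.mem_univ i0) ?_).symm
    rw [Measure.dirac_apply' _ (hs i0), Set.indicator_of_notMem hi0]

lemma pi_prod_add (m : ℕ) (μ ν : Fin m → Measure ℝ)
    [∀ i, IsProbabilityMeasure (μ i)] [∀ i, IsProbabilityMeasure (ν i)] :
    ((Measure.pi μ).prod (Measure.pi ν)).map (fun p (i : Fin m) => p.1 i + p.2 i)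
      = Measure.pi (fun i => Measure.conv (μ i) (ν i)) := by
  have h1 := measurePreserving_arrowProdEquivProdArrow ℝ ℝ (Fin m) μ ν
  have h2 : MeasurePreserving (fun (w : Fin m → ℝ × ℝ) (i : Fin m) => (w i).1 + (w i).2)
      (Measure.pi fun i => (μ i).prod (ν i))
      (Measure.pi fun i => Measure.conv (μ i) (ν i)) :=
    measurePreserving_pi _ _ (fun i => ⟨measurable_fst.add measurable_snd, rfl⟩)
  have hadd : Measurable (fun p : (Fin m → ℝ) × (Fin m → ℝ) => fun i => p.1 i + p.2 i) :=
    measurable_pi_lambda _ fun i =>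
      ((measurable_pi_apply i).comp measurable_fst).add
        ((measurable_pi_apply i).comp measurable_snd)
  rw [← h1.map_eq, Measure.map_map hadd (MeasurableEquiv.arrowProdEquivProdArrow ℝ ℝ (Fin m)).measurable]
  exact h2.map_eq

/-- block equiv for the induction step -/
def stepEquiv (m k : ℕ) : (Fin m ⊕ Fin m × Fin k) ≃ (Fin m × Fin (k+1)) where
  toFun := Sum.elim (fun i => (i, 0)) (fun q => (q.1, q.2.succ))
  invFun := fun p => Fin.cases (Sum.inl p.1) (fun j => Sum.inr (p.1, j)) p.2
  left_inv := by rintro (i | ⟨i, j⟩) <;> simp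
  right_inv := by
    rintro ⟨i, j⟩
    induction j using Fin.cases <;> simp

lemma sum_pi_gaussian (m k : ℕ) (v : ℝ≥0) :
    (Measure.pi fun _ : Fin m × Fin k => gaussianReal 0 v).map
      (fun (y : Fin m × Fin k → ℝ) (i : Fin m) => ∑ j : Fin k, y (i, j))
    = Measure.pi fun _ : Fin m => gaussianReal 0 ((k : ℝ≥0) * v) := by
  induction k with
  | zero =>
    have hfun : (fun (y : Fin m × Fin 0 → ℝ) (i : Fin m) => ∑ j : Fin 0, y (i, j))
        = fun _ => (fun _ : Fin m => (0:ℝ)) := by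
      funext y i
      simp
    rw [hfun, Measure.map_const]
    simp [pi_dirac_zero]
  | succ k ih =>
    set γ := gaussianReal 0 v with hγ
    have h1 := measurePreserving_piCongrLeft (fun _ : Fin m × Fin (k+1) => γ) (stepEquiv m k)
    have h2 := measurePreserving_sumPiEquivProdPi_symm
      (fun _ : Fin m ⊕ Fin m × Fin k => γ)
    have hS : Measurable (fun (y : Fin m × Fin (k+1) → ℝ) (i : Fin m) => ∑ j : Fin (k+1), y (i, j)) :=
      measurable_pi_lambda _ fun i => Finset.measurable_sum _ (fun j _ => measurable_pi_apply _)
    have hSk : Measurable (fun (y : Fin m × Fin k → ℝ) (i : Fin m) => ∑ j : Fin k, y (i, j)) :=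
      measurable_pi_lambda _ fun i => Finset.measurable_sum _ (fun j _ => measurable_pi_apply _)
    rw [← h1.map_eq, ← h2.map_eq, Measure.map_map h1.measurable h2.measurable,
      Measure.map_map hS (h1.measurable.comp h2.measurable)]
    -- compute the composite function
    have hcomp : ((fun (y : Fin m × Fin (k+1) → ℝ) (i : Fin m) => ∑ j : Fin (k+1), y (i, j)) ∘
        ((MeasurableEquiv.piCongrLeft (fun _ : Fin m × Fin (k+1) => ℝ) (stepEquiv m k)) ∘
          (MeasurableEquiv.sumPiEquivProdPi (fun _ : Fin m ⊕ Fin m × Fin k => ℝ)).symm))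
        = (fun (p : (Fin m → ℝ) × (Fin m → ℝ)) (i : Fin m) => p.1 i + p.2 i) ∘
          (Prod.map id (fun (y : Fin m × Fin k → ℝ) (i : Fin m) => ∑ j : Fin k, y (i, j))) := by
      funext p
      funext i
      simp only [Function.comp_apply, Prod.map_apply, id_eq]
      have hpc : ∀ (w : Fin m ⊕ Fin m × Fin k → ℝ) (b : Fin m × Fin (k+1)),
          (MeasurableEquiv.piCongrLeft (fun _ : Fin m × Fin (k+1) => ℝ) (stepEquiv m k)) w b
            = w ((stepEquiv m k).symm b) := by
        intro w b
        have := MeasurableEquiv.piCongrLeft_apply_apply (stepEquiv m k)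
          (β := fun _ : Fin m × Fin (k+1) => ℝ) w ((stepEquiv m k).symm b)
        simpa using this
      simp only [hpc]
      rw [Fin.sum_univ_succ]
      have hsymm0 : (stepEquiv m k).symm (i, 0) = Sum.inl i := by
        simp [stepEquiv]
      have hsymmS : ∀ j : Fin k, (stepEquiv m k).symm (i, j.succ) = Sum.inr (i, j) := by
        intro j; simp [stepEquiv]
      rw [hsymm0]
      simp only [hsymmS]
      simp [MeasurableEquiv.coe_sumPiEquivProdPi_symm, Equiv.sumPiEquivProdPi_symm_apply]
    rw [hcomp, ← Measure.map_map (by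
        exact measurable_pi_lambda _ fun i =>
          ((measurable_pi_apply i).comp measurable_fst).add
            ((measurable_pi_apply i).comp measurable_snd))
      (measurable_id.prodMap hSk)]
    rw [← Measure.map_prod_map _ _ measurable_id hSk, Measure.map_id, ih]
    rw [pi_prod_add m (fun _ => γ) (fun _ => gaussianReal 0 ((k:ℝ≥0) * v))]
    congr with i
    rw [hγ, gaussianReal_conv]
    congr 1
    push_cast
    ring

theorem stmt19 (m M : ℕ) (hm : 1 ≤ m) (hM : 1 ≤ M) (hdvd : m ∣ M) :
    (Measure.pi (fun _ : Fin M => gaussianReal 0 ((M : ℝ≥0))⁻¹)).map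
        (fun x : Fin M → ℝ => binOp (dmap m M hM hdvd) x)
      = Measure.pi (fun _ : Fin m => gaussianReal 0 ((m : ℝ≥0))⁻¹) := by
  classical
  set k := M / m with hkdef
  have hk : m * k = M := Nat.mul_div_cancel' hdvd
  have hkpos : 0 < k := Nat.div_pos (Nat.le_of_dvd hM hdvd) hm
  set e2 : Fin m × Fin k ≃ Fin M := finProdFinEquiv.trans (finCongr hk) with he2
  have hval : ∀ (a : Fin m) (b : Fin k), ((e2 (a, b)) : ℕ) = (b : ℕ) + k * a := fun a b => rfl
  have hd : ∀ (a : Fin m) (b : Fin k), dmap m M hM hdvd (e2 (a, b)) = a := by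
    intro a b
    apply Fin.ext
    show ((e2 (a, b)) : ℕ) / (M / m) = a
    rw [hval, ← hkdef, Nat.add_mul_div_left _ _ hkpos, Nat.div_eq_of_lt b.isLt, zero_add]
  have h1 := measurePreserving_piCongrLeft (fun _ : Fin M => gaussianReal 0 ((M : ℝ≥0))⁻¹) e2
  have hbin : Measurable (fun x : Fin M → ℝ => binOp (dmap m M hM hdvd) x) :=
    measurable_pi_lambda _ fun i => Finset.measurable_sum _ fun j _ => measurable_pi_apply _
  rw [← h1.map_eq, Measure.map_map hbin h1.measurable]
  have hpc : ∀ (w : Fin m × Fin k → ℝ) (b : Fin M),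
      (MeasurableEquiv.piCongrLeft (fun _ : Fin M => ℝ) e2) w b = w (e2.symm b) := by
    intro w b
    have := MeasurableEquiv.piCongrLeft_apply_apply e2 (β := fun _ : Fin M => ℝ) w (e2.symm b)
    simpa using this
  have hcomp : ((fun x : Fin M → ℝ => binOp (dmap m M hM hdvd) x) ∘
      (MeasurableEquiv.piCongrLeft (fun _ : Fin M => ℝ) e2))
      = fun (y : Fin m × Fin k → ℝ) (i : Fin m) => ∑ j : Fin k, y (i, j) := by
    funext w i
    simp only [Function.comp_apply, binOp]
    simp only [hpc]
    refine Finset.sum_nbij' (fun j' => (e2.symm j').2) (fun j => e2 (i, j)) ?_ ?_ ?_ ?_ ?_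
    · intro j' hj'
      exact Finset.mem_univ _
    · intro j _
      simp only [Finset.mem_filter, Finset.mem_univ, true_and]
      exact hd i j
    · intro j' hj'
      simp only [Finset.mem_filter, Finset.mem_univ, true_and] at hj'
      have hq : (e2.symm j').1 = i := by
        have := hd (e2.symm j').1 (e2.symm j').2
        rw [show ((e2.symm j').1, (e2.symm j').2) = e2.symm j' from rfl,
          Equiv.apply_symm_apply] at this
        rw [← hj', this]
      conv_rhs => rw [← Equiv.apply_symm_apply e2 j']
      rw [← hq]
    · intro j _
      simp
    · intro j' hj'
      simp only [Finset.mem_filter, Finset.mem_univ, true_and] at hj'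
      have hq : (e2.symm j').1 = i := by
        have := hd (e2.symm j').1 (e2.symm j').2
        rw [show ((e2.symm j').1, (e2.symm j').2) = e2.symm j' from rfl,
          Equiv.apply_symm_apply] at this
        rw [← hj', this]
      conv_lhs => rw [show e2.symm j' = ((e2.symm j').1, (e2.symm j').2) from rfl, hq]
  rw [hcomp, sum_pi_gaussian m k ((M : ℝ≥0))⁻¹]
  have hm0' : m ≠ 0 := by omega
  have hm0 : ((m : ℝ≥0)) ≠ 0 := by exact_mod_cast hm0'
  have hk0 : ((k : ℝ≥0)) ≠ 0 := by exact_mod_cast hkpos.ne'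
  have hvar : (k : ℝ≥0) * ((M : ℝ≥0))⁻¹ = ((m : ℝ≥0))⁻¹ := by
    have hMc : (M : ℝ≥0) = (m : ℝ≥0) * (k : ℝ≥0) := by exact_mod_cast hk.symm
    rw [hMc, mul_inv, mul_comm ((m : ℝ≥0))⁻¹, ← mul_assoc, mul_inv_cancel₀ hk0, one_mul]
  rw [hvar]
end
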